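/- Under the Bayesian update with strictly positive likelihoods and full-support prior driven by i.i.d. signals from l(·|θ*), the limit π_∞(θ*) = lim_{t→∞} π_t(θ*) exists almost surely and satisfies π_∞(θ*) ≥ π_0(θ*). -/

import Mathlib

open Finset MeasureTheory ProbabilityTheory Filter
open Topology

/-- Gibbs' inequality: the expected log-likelihood-ratio is strictly negative when the two
pmfs differ. -/
lemma gibbs_aux {S : Type*} [Fintype S] (p q : S → ℝ) (hp : ∀ w, 0 < p w) (hq : ∀ w, 0 < q w)
    (hps : ∑ w, p w = 1) (hqs : ∑ w, q w = 1) (hne : ∃ w, q w ≠ p w) :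
    ∑ w, p w * Real.log (q w / p w) < 0 := by
  obtain ⟨w₀, hw₀⟩ := hne
  have key : ∀ w, p w * (q w / p w - 1) = q w - p w := fun w => by
    rw [mul_sub, mul_div_cancel₀ _ (hp w).ne', mul_one]
  have hlt : ∑ w, p w * Real.log (q w / p w) < ∑ w, (q w - p w) := by
    apply Finset.sum_lt_sum
    · intro w _
      rw [← key w]
      exact mul_le_mul_of_nonneg_left
        (Real.log_le_sub_one_of_pos (div_pos (hq w) (hp w))) (hp w).le
    · refine ⟨w₀, Finset.mem_univ _, ?_⟩
      rw [← key w₀]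
      refine mul_lt_mul_of_pos_left ?_ (hp w₀)
      refine Real.log_lt_sub_one_of_pos (div_pos (hq w₀) (hp w₀)) ?_
      intro h
      exact hw₀ ((div_eq_one_iff_eq (hp w₀).ne').1 h)
  have hz : ∑ w, (q w - p w) = 0 := by
    rw [Finset.sum_sub_distrib, hps, hqs]; ring
  linarith

/-- If the averages of `u` converge to a negative constant, then `u` tends to `-∞`. -/
lemma tendsto_atBot_of_avg {u : ℕ → ℝ} {c : ℝ} (hc : c < 0)
    (h : Tendsto (fun n : ℕ => u n / n) atTop (𝓝 c)) : Tendsto u atTop atBot := by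
  have h2 : ∀ᶠ n : ℕ in atTop, u n / n < c / 2 := h.eventually (gt_mem_nhds (by linarith))
  have h3 : Tendsto (fun n : ℕ => c / 2 * n) atTop atBot :=
    (tendsto_const_mul_atBot_of_neg (by linarith)).2 tendsto_natCast_atTop_atTop
  refine tendsto_atBot_mono' atTop ?_ h3
  filter_upwards [h2, eventually_ge_atTop 1] with n hn hn1
  have hnpos : (0 : ℝ) < n := by exact_mod_cast hn1
  have := (div_lt_iff₀ hnpos).1 hn
  linarith

/-- Under the Bayesian update driven by i.i.d. signals with law `l(·|θ*)`, the belief on the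
true state converges almost surely to a limit that is at least the prior belief. -/
theorem stmt6 {Ω : Type*} [MeasurableSpace Ω] (Pm : Measure Ω) [IsProbabilityMeasure Pm]
    {Θ S : Type*} [Fintype Θ] [Fintype S] [MeasurableSpace S] [MeasurableSingletonClass S]
    (l : S → Θ → ℝ) (hl : ∀ w θ, 0 < l w θ) (hlsum : ∀ θ, ∑ w, l w θ = 1)
    (θstar : Θ)
    (s : ℕ → Ω → S) (hmeas : ∀ t, Measurable (s t))
    (hindep : iIndepFun s Pm)
    (hlaw : ∀ t w, Pm {ω | s t ω = w} = ENNReal.ofReal (l w θstar))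
    (π : ℕ → Θ → Ω → ℝ)
    (hπ0 : ∀ θ ω, 0 < π 0 θ ω) (hπ0sum : ∀ ω, ∑ θ, π 0 θ ω = 1)
    (hrec : ∀ t θ ω, π (t + 1) θ ω =
      l (s (t + 1) ω) θ * π t θ ω / ∑ p, l (s (t + 1) ω) p * π t p ω) :
    ∀ᵐ ω ∂Pm, ∃ L : ℝ, π 0 θstar ω ≤ L ∧
      Tendsto (fun t => π t θstar ω) atTop (nhds L) := by
  classical
  set f : Θ → S → ℝ := fun θ w => Real.log (l w θ / l w θstar) with hf
  set c : Θ → ℝ := fun θ => ∑ w, l w θstar * f θ w with hc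
  have hfmeas : ∀ θ, Measurable (f θ) := fun θ => measurable_of_countable _
  -- the distributions of the signals coincide
  have hmap : ∀ t t', Pm.map (s t) = Pm.map (s t') := by
    intro t t'
    apply MeasureTheory.Measure.ext_of_singleton
    intro w
    rw [Measure.map_apply (hmeas t) (measurableSet_singleton w),
      Measure.map_apply (hmeas t') (measurableSet_singleton w)]
    have h1 : s t ⁻¹' {w} = {ω | s t ω = w} := rfl
    have h2 : s t' ⁻¹' {w} = {ω | s t' ω = w} := rfl
    rw [h1, h2, hlaw, hlaw]
  -- strong law of large numbers for the log-likelihood ratios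
  have hSLLN : ∀ θ : Θ, ∀ᵐ ω ∂Pm,
      Tendsto (fun n : ℕ => (∑ i ∈ range n, f θ (s (i + 1) ω)) / n) atTop (𝓝 (c θ)) := by
    intro θ
    set X : ℕ → Ω → ℝ := fun i ω => f θ (s (i + 1) ω) with hX
    have hXmeas : ∀ i, Measurable (X i) := fun i => (hfmeas θ).comp (hmeas (i + 1))
    have hint : Integrable (X 0) Pm := by
      refine Integrable.mono' (integrable_const (∑ w, |f θ w|))
        (hXmeas 0).aestronglyMeasurable ?_
      filter_upwards with ω
      rw [Real.norm_eq_abs]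
      exact Finset.single_le_sum (f := fun w => |f θ w|) (fun w _ => abs_nonneg _)
        (Finset.mem_univ _)
    have hindep' : Pairwise (Function.onFun (IndepFun · · Pm) X) := by
      intro i j hij
      exact (hindep.indepFun (show i + 1 ≠ j + 1 by omega)).comp (hfmeas θ) (hfmeas θ)
    have hident : ∀ i, IdentDistrib (X i) (X 0) Pm Pm := by
      intro i
      have : IdentDistrib (s (i + 1)) (s 1) Pm Pm :=
        ⟨(hmeas _).aemeasurable, (hmeas _).aemeasurable, hmap _ _⟩
      exact this.comp (hfmeas θ)
    have hmean : Pm[X 0] = c θ := by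
      have h1 : Pm[X 0] = ∫ w, f θ w ∂(Pm.map (s 1)) :=
        (integral_map (hmeas 1).aemeasurable (hfmeas θ).aestronglyMeasurable).symm
      have : IsProbabilityMeasure (Pm.map (s 1)) :=
        Measure.isProbabilityMeasure_map (hmeas 1).aemeasurable
      rw [h1, integral_fintype Integrable.of_finite]
      refine Finset.sum_congr rfl fun w _ => ?_
      rw [measureReal_def, Measure.map_apply (hmeas 1) (measurableSet_singleton w)]
      have h2 : s 1 ⁻¹' {w} = {ω | s 1 ω = w} := rfl
      rw [h2, hlaw, ENNReal.toReal_ofReal (hl w θstar).le, smul_eq_mul]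
    have := strong_law_ae_real X hint hindep' hident
    rw [hmean] at this
    exact this
  have hAE : ∀ᵐ ω ∂Pm, ∀ θ : Θ,
      Tendsto (fun n : ℕ => (∑ i ∈ range n, f θ (s (i + 1) ω)) / n) atTop (𝓝 (c θ)) :=
    (ae_all_iff).2 hSLLN
  -- deterministic part
  filter_upwards [hAE] with ω hω
  set W : ℕ → Θ → ℝ := fun t θ => π 0 θ ω * ∏ i ∈ range t, l (s (i + 1) ω) θ with hW
  have hWpos : ∀ t θ, 0 < W t θ := fun t θ =>
    mul_pos (hπ0 θ ω) (Finset.prod_pos fun i _ => hl _ _)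
  have hDpos : ∀ t, 0 < ∑ p, W t p := fun t =>
    Finset.sum_pos (fun p _ => hWpos t p) ⟨θstar, Finset.mem_univ _⟩
  -- explicit form of the posterior
  have hπeq : ∀ t θ, π t θ ω = W t θ / ∑ p, W t p := by
    intro t
    induction t with
    | zero =>
      intro θ
      simp only [hW, Finset.range_zero, Finset.prod_empty, mul_one]
      rw [hπ0sum ω, div_one]
    | succ t IH =>
      intro θ
      have hWs : ∀ p, W (t + 1) p = l (s (t + 1) ω) p * W t p := by
        intro p
        simp only [hW, Finset.prod_range_succ]
        ring
      have hD : (∑ p, W t p) ≠ 0 := (hDpos t).ne'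
      have hN : (∑ p, l (s (t + 1) ω) p * W t p) ≠ 0 :=
        (Finset.sum_pos (fun p _ => mul_pos (hl _ _) (hWpos t p)) ⟨θstar, Finset.mem_univ _⟩).ne'
      rw [hrec]
      simp only [IH]
      have hsum : (∑ p, l (s (t + 1) ω) p * (W t p / ∑ q, W t q)) =
          (∑ p, l (s (t + 1) ω) p * W t p) / ∑ q, W t q := by
        rw [Finset.sum_div]
        exact Finset.sum_congr rfl fun p _ => (mul_div_assoc _ _ _).symm
      rw [hsum]
      have hsum2 : (∑ p, W (t + 1) p) = ∑ p, l (s (t + 1) ω) p * W t p :=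
        Finset.sum_congr rfl fun p _ => hWs p
      rw [hWs θ, hsum2, ← mul_div_assoc]
      rw [div_div_div_cancel_right₀]
      exact hD
  -- limits of the likelihood ratios
  set E : Θ → Prop := fun p => ∀ w, l w p = l w θstar with hE
  have hratio : ∀ p, Tendsto (fun t => W t p / W t θstar) atTop
      (𝓝 (if E p then π 0 p ω / π 0 θstar ω else 0)) := by
    intro p
    by_cases hp : E p
    · rw [if_pos hp]
      have heq : ∀ t, W t p / W t θstar = π 0 p ω / π 0 θstar ω := by
        intro t
        have hprod : (∏ i ∈ range t, l (s (i + 1) ω) p) =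
            ∏ i ∈ range t, l (s (i + 1) ω) θstar :=
          Finset.prod_congr rfl fun i _ => hp _
        simp only [hW, hprod]
        rw [mul_div_mul_right _ _ (Finset.prod_pos fun i _ => hl _ _).ne']
      simp only [heq]
      exact tendsto_const_nhds
    · rw [if_neg hp]
      have hcneg : c p < 0 := by
        refine gibbs_aux (fun w => l w θstar) (fun w => l w p) (fun w => hl w θstar)
          (fun w => hl w p) (hlsum θstar) (hlsum p) ?_
        have hp' : ∃ w, l w p ≠ l w θstar := not_forall.1 hp
        obtain ⟨w, hw⟩ := hp'
        exact ⟨w, hw⟩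
      have hsumBot : Tendsto (fun t : ℕ => ∑ i ∈ range t, f p (s (i + 1) ω)) atTop atBot :=
        tendsto_atBot_of_avg hcneg (hω p)
      have hexp : Tendsto (fun t : ℕ => Real.exp (∑ i ∈ range t, f p (s (i + 1) ω)))
          atTop (𝓝 0) := Real.tendsto_exp_atBot.comp hsumBot
      have heq : ∀ t, W t p / W t θstar =
          (π 0 p ω / π 0 θstar ω) * Real.exp (∑ i ∈ range t, f p (s (i + 1) ω)) := by
        intro t
        have hterm : ∀ i, Real.exp (f p (s (i + 1) ω)) =
            l (s (i + 1) ω) p / l (s (i + 1) ω) θstar := fun i =>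
          Real.exp_log (div_pos (hl _ _) (hl _ _))
        rw [Real.exp_sum]
        simp only [hterm]
        rw [Finset.prod_div_distrib]
        simp only [hW]
        rw [div_mul_div_comm]
      simp only [heq]
      have := hexp.const_mul (π 0 p ω / π 0 θstar ω)
      rwa [mul_zero] at this
  set Lden : ℝ := ∑ p, (if E p then π 0 p ω / π 0 θstar ω else 0) with hLden
  have hR : Tendsto (fun t => ∑ p, W t p / W t θstar) atTop (𝓝 Lden) :=
    tendsto_finset_sum _ fun p _ => hratio p
  have hEstar : E θstar := fun w => rfl
  have hLden1 : (1 : ℝ) ≤ Lden := by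
    have h1 : (if E θstar then π 0 θstar ω / π 0 θstar ω else 0) = 1 := by
      rw [if_pos hEstar, div_self (hπ0 θstar ω).ne']
    calc (1 : ℝ) = (if E θstar then π 0 θstar ω / π 0 θstar ω else 0) := h1.symm
      _ ≤ Lden := Finset.single_le_sum
          (f := fun p => if E p then π 0 p ω / π 0 θstar ω else 0)
          (fun p _ => by
            split
            · exact div_nonneg (hπ0 p ω).le (hπ0 θstar ω).le
            · exact le_rfl) (Finset.mem_univ θstar)
  have hLdenpos : 0 < Lden := lt_of_lt_of_le one_pos hLden1
  have hLdenle : Lden ≤ 1 / π 0 θstar ω := by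
    have h1 : Lden ≤ ∑ p, π 0 p ω / π 0 θstar ω := by
      refine Finset.sum_le_sum fun p _ => ?_
      split
      · exact le_rfl
      · exact div_nonneg (hπ0 p ω).le (hπ0 θstar ω).le
    have h2 : (∑ p, π 0 p ω / π 0 θstar ω) = 1 / π 0 θstar ω := by
      rw [← Finset.sum_div, hπ0sum ω]
    linarith
  -- the posterior on θ* equals 1 / (sum of ratios)
  have hπform : ∀ t, π t θstar ω = 1 / ∑ p, W t p / W t θstar := by
    intro t
    rw [hπeq t θstar]
    rw [← Finset.sum_div, one_div_div]
  refine ⟨1 / Lden, ?_, ?_⟩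
  · have := one_div_le_one_div_of_le hLdenpos hLdenle
    rwa [one_div_one_div] at this
  · simp only [hπform]
    exact (tendsto_const_nhds.div hR hLdenpos.ne')
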